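/- Let n ≥ 3 and m be positive integers with m ≥ n − 1, and let P^{(1)}(n,m) denote the proportion of elements g ∈ S_n with g^m = 1 for which the three points 1, 2, 3 all lie in the same cycle of g. Then P^{(1)}(n,m) = ((n−3)!/n!) · ∑_{d | m, 3 ≤ d ≤ n} (d − 1)(d − 2) · P(n − d, m), where the sum is over positive divisors d of m with 3 ≤ d ≤ n. -/

import Mathlib

/-- P(n,m): the proportion of elements of the symmetric group `S_n`
with `g ^ m = 1` (for `n = 0` this equals `1`, matching the convention
`P(r,m) = 1` for `r ≤ 0`). -/
noncomputable def P (n m : ℕ) : ℝ :=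
  (Nat.card {g : Equiv.Perm (Fin n) // g ^ m = 1} : ℝ) / (Nat.factorial n)

section Aux


open Equiv Equiv.Perm Finset

variable {α : Type*} [Fintype α] [DecidableEq α]

lemma card_nodup_lists (u : Finset α) :
    Nat.card {t : List α // t.Nodup ∧ t.toFinset = u} = u.card.factorial := by
  have h1 : Nat.card (Fin u.card ≃ {x // x ∈ u}) = u.card.factorial := by
    rw [Nat.card_eq_fintype_card,
      Fintype.card_equiv (Fintype.equivFinOfCardEq (Fintype.card_coe u)).symm]
    simp
  rw [← h1]
  refine (Nat.card_eq_of_bijective (fun e => ⟨List.ofFn (fun i => (e i : α)),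
    List.nodup_ofFn.mpr (Subtype.coe_injective.comp e.injective), by
      ext a
      simp only [List.mem_toFinset, List.mem_ofFn, Set.mem_range]
      constructor
      · rintro ⟨i, rfl⟩; exact (e i).2
      · intro ha; exact ⟨e.symm ⟨a, ha⟩, by simp⟩⟩) ⟨?_, ?_⟩).symm
  · intro e e' hee
    have h2' : (List.ofFn fun i => ((e i : α))) = List.ofFn fun i => ((e' i : α)) := by
      simpa using congrArg Subtype.val hee
    have h2 := List.ofFn_injective h2'
    ext i
    exact congrFun h2 i
  · rintro ⟨t, hnd, hts⟩
    have hlen : t.length = u.card := by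
      rw [← hts, List.toFinset_card_of_nodup hnd]
    let g : Fin u.card → {x // x ∈ u} := fun i =>
      ⟨t.get (Fin.cast hlen.symm i), by
        have hx : t.get (Fin.cast hlen.symm i) ∈ t.toFinset := List.mem_toFinset.mpr (t.get_mem _)
        rwa [hts] at hx⟩
    have hg : Function.Injective g := by
      intro i j hij
      have := List.nodup_iff_injective_get.mp hnd (congrArg Subtype.val hij)
      simpa [g, Fin.ext_iff] using this
    refine ⟨Equiv.ofBijective g ((Fintype.bijective_iff_injective_and_card g).mpr ⟨hg, by simp⟩), ?_⟩
    apply Subtype.ext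
    simp only [Equiv.ofBijective_apply]
    apply List.ext_get (by simp [hlen])
    intro i h1' h2'
    simp [g]

lemma card_cycles_support_eq {S : Finset α} {x0 : α} (hx0 : x0 ∈ S) (h2 : 2 ≤ S.card) :
    Nat.card {c : Perm α // c.IsCycle ∧ c.support = S} = (S.card - 1).factorial := by
  have hcount := card_nodup_lists (S.erase x0)
  rw [Finset.card_erase_of_mem hx0] at hcount
  rw [← hcount]
  have key : ∀ t : {t : List α // t.Nodup ∧ t.toFinset = S.erase x0},
      (x0 :: t.1).Nodup ∧ 2 ≤ (x0 :: t.1).length := by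
    rintro ⟨t, hnd, hts⟩
    have hx0t : x0 ∉ t := by
      intro hx
      exact (Finset.ne_of_mem_erase (hts ▸ List.mem_toFinset.mpr hx)) rfl
    refine ⟨List.nodup_cons.mpr ⟨hx0t, hnd⟩, ?_⟩
    show 2 ≤ (x0 :: t).length
    have : t.length = S.card - 1 := by
      rw [← List.toFinset_card_of_nodup hnd, hts, Finset.card_erase_of_mem hx0]
    have hlc : (x0 :: t).length = t.length + 1 := List.length_cons
    omega
  refine (Nat.card_eq_of_bijective (fun t => ⟨(x0 :: t.1).formPerm,
    List.isCycle_formPerm (key t).1 (key t).2, by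
      rw [List.support_formPerm_of_nodup _ (key t).1 (by
        intro x hx
        have h2 := (key t).2
        rw [hx] at h2
        simp at h2)]
      rw [List.toFinset_cons, t.2.2, Finset.insert_erase hx0]⟩) ⟨?_, ?_⟩).symm
  · rintro t t' htt
    have h1 := congrArg Subtype.val htt
    simp only at h1
    have e1 := toList_formPerm_nontrivial (x0 :: t.1) (key t).2 (key t).1
    have e2 := toList_formPerm_nontrivial (x0 :: t'.1) (key t').2 (key t').1
    simp only [List.get] at e1 e2
    rw [h1] at e1
    have h3 : x0 :: (t.1 : List α) = x0 :: (t'.1 : List α) := e1.symm.trans e2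
    simp only [List.cons.injEq, true_and] at h3
    exact Subtype.ext h3
  · rintro ⟨c, hcyc, hsupp⟩
    have hx0c : c x0 ≠ x0 := mem_support.mp (hsupp ▸ hx0)
    have hlnd := nodup_toList c x0
    have hform : (toList c x0).formPerm = c := by
      rw [formPerm_toList, hcyc.cycleOf_eq hx0c]
    have hlts : (toList c x0).toFinset = S := by
      ext y
      rw [List.mem_toFinset, mem_toList_iff, ← mem_support_cycleOf_iff,
        hcyc.cycleOf_eq hx0c, hsupp]
    have hlnil : toList c x0 ≠ [] := by
      intro hnil
      rw [toList_eq_nil_iff] at hnil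
      exact hnil (hsupp ▸ hx0)
    obtain ⟨a, t, hat⟩ := List.exists_cons_of_ne_nil hlnil
    have ha : a = x0 := by
      have h0 := toList_getElem_zero (p := c) (x := x0) (mem_support.mpr hx0c)
      simp only [hat, List.getElem_cons_zero] at h0
      simpa using h0
    rw [ha] at hat
    have hx0t : x0 ∉ t := by
      have := hat ▸ hlnd
      exact (List.nodup_cons.mp this).1
    have htnd : t.Nodup := (List.nodup_cons.mp (hat ▸ hlnd)).2
    refine ⟨⟨t, htnd, ?_⟩, ?_⟩
    · have : insert x0 t.toFinset = S := by
        rw [← List.toFinset_cons, ← hat, hlts]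
      rw [← this, Finset.erase_insert (by simpa using hx0t)]
    · apply Subtype.ext
      simp only
      rw [← hat, hform]

lemma key_disjoint {c h : Perm α} {S : Finset α} (hcs : c.support = S)
    (hhs : ∀ x, h x ≠ x → x ∉ S) : Perm.Disjoint c h := by
  intro x
  by_cases hx : x ∈ S
  · right
    by_contra hne
    exact hhs x hne hx
  · left
    exact notMem_support.mp (fun hc => hx (hcs ▸ hc))

lemma key_cycleOf {c h : Perm α} {S : Finset α} {x0 : α} (hx0 : x0 ∈ S) (hcyc : c.IsCycle)
    (hcs : c.support = S) (hhs : ∀ x, h x ≠ x → x ∉ S) : (c * h).cycleOf x0 = c := by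
  have hcomm : Commute c h := (key_disjoint hcs hhs).commute
  have hhx0 : h x0 = x0 := by
    by_contra hne
    exact hhs x0 hne hx0
  rw [cycleOf_mul_of_apply_right_eq_self hcomm x0 hhx0,
    hcyc.cycleOf_eq (mem_support.mp (hcs ▸ hx0))]

lemma card_fiber {m : ℕ} (S : Finset α) (x0 : α) (hx0 : x0 ∈ S) (h2 : 2 ≤ S.card)
    (hdm : S.card ∣ m) :
    Nat.card {g : Perm α // g ^ m = 1 ∧ (g.cycleOf x0).support = S}
      = (S.card - 1).factorial *
        Nat.card {h : Perm α // h ^ m = 1 ∧ ∀ x, h x ≠ x → x ∉ S} := by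
  rw [← card_cycles_support_eq hx0 h2, ← Nat.card_prod]
  have hcm : ∀ c : Perm α, c.IsCycle → c.support = S → c ^ m = 1 := by
    intro c hcyc hcs
    refine orderOf_dvd_iff_pow_eq_one.mp ?_
    rw [hcyc.orderOf, hcs]
    exact hdm
  refine (Nat.card_eq_of_bijective (fun p => ⟨p.1.1 * p.2.1, by
      have hcomm : Commute p.1.1 p.2.1 := (key_disjoint p.1.2.2 p.2.2.2).commute
      rw [hcomm.mul_pow, hcm _ p.1.2.1 p.1.2.2, p.2.2.1, one_mul], by
      rw [key_cycleOf hx0 p.1.2.1 p.1.2.2 p.2.2.2]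
      exact p.1.2.2⟩) ⟨?_, ?_⟩).symm
  · rintro p q hpq
    have h1 := congrArg Subtype.val hpq
    simp only at h1
    have hc : p.1.1 = q.1.1 := by
      rw [← key_cycleOf hx0 p.1.2.1 p.1.2.2 p.2.2.2, ← key_cycleOf hx0 q.1.2.1 q.1.2.2 q.2.2.2, h1]
    have hh : p.2.1 = q.2.1 := by
      have := congrArg (fun z => p.1.1⁻¹ * z) h1
      simpa [hc, mul_assoc] using this
    exact Prod.ext (Subtype.ext hc) (Subtype.ext hh)
  · rintro ⟨g, hg, hS⟩
    have hx0g : x0 ∈ g.support := ((mem_support_cycleOf_iff).mp (hS ▸ hx0)).2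
    set c := g.cycleOf x0 with hc
    have hcyc : c.IsCycle := isCycle_cycleOf g (mem_support.mp hx0g)
    have hcs : c.support = S := hS
    set h := c⁻¹ * g with hh
    have hfix : ∀ x, h x ≠ x → x ∉ S := by
      intro x hne hxS
      apply hne
      have hsc : g.SameCycle x0 x := ((mem_support_cycleOf_iff).mp (hS ▸ hxS)).1
      have : c x = g x := hsc.cycleOf_apply
      show c⁻¹ (g x) = x
      rw [← this]
      exact c.symm_apply_apply x
    have hgch : g = c * h := by rw [hh, mul_inv_cancel_left]
    have hcomm : Commute c h := (key_disjoint hcs hfix).commute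
    have hhm : h ^ m = 1 := by
      have := hcomm.mul_pow m
      rw [← hgch, hg, hcm c hcyc hcs, one_mul] at this
      exact this.symm
    exact ⟨⟨⟨c, hcyc, hcs⟩, ⟨h, hhm, hfix⟩⟩, Subtype.ext hgch.symm⟩

lemma card_pow_subtype {m : ℕ} (p : α → Prop) [DecidablePred p] :
    Nat.card {h : Perm α // h ^ m = 1 ∧ ∀ x, h x ≠ x → p x}
      = Nat.card {h : Perm (Subtype p) // h ^ m = 1} := by
  have hinj : Function.Injective (ofSubtype : Perm (Subtype p) →* Perm α) := by
    intro f g hfg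
    ext x
    have : ofSubtype f x = ofSubtype g x := by rw [hfg]
    rw [ofSubtype_apply_coe, ofSubtype_apply_coe] at this
    exact this
  refine (Nat.card_eq_of_bijective (fun f => ⟨ofSubtype f.1, by
      rw [← map_pow, f.2, map_one], fun x hx => by
      by_contra hpx
      exact hx (ofSubtype_apply_of_not_mem f.1 hpx)⟩) ⟨?_, ?_⟩).symm
  · rintro f g hfg
    exact Subtype.ext (hinj (congrArg Subtype.val hfg))
  · rintro ⟨h, hm, hsupp⟩
    have hinv : ∀ x, p x ↔ p (h x) := by
      intro x
      by_cases hfx : h x = x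
      · rw [hfx]
      · constructor
        · intro _
          exact hsupp (h x) (fun hcon => hfx (h.injective hcon))
        · intro _
          exact hsupp x hfx
    refine ⟨⟨h.subtypePerm (fun x => (hinv x).symm), ?_⟩, Subtype.ext (ofSubtype_subtypePerm (fun x => (hinv x).symm) hsupp)⟩
    apply hinj
    rw [map_pow, map_one, ofSubtype_subtypePerm (fun x => (hinv x).symm) hsupp, hm]

lemma card_pow_congr {β γ : Type*} (e : β ≃ γ) (m : ℕ) :
    Nat.card {h : Perm β // h ^ m = 1} = Nat.card {h : Perm γ // h ^ m = 1} := by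
  have hmul : ∀ p q : Perm β, e.permCongr (p * q) = e.permCongr p * e.permCongr q := by
    intro p q
    ext x
    simp [Equiv.permCongr_apply, Perm.mul_apply]
  let φ : Perm β →* Perm γ := MonoidHom.mk' e.permCongr hmul
  have hφinj : Function.Injective φ := (e.permCongr).injective
  refine Nat.card_congr (Equiv.subtypeEquiv e.permCongr (fun h => ⟨fun h1 => ?_, fun h1 => ?_⟩))
  · show (φ h) ^ m = 1
    rw [← map_pow, h1, map_one]
  · apply hφinj
    rw [map_pow, map_one]
    exact h1
  
lemma cycleOf_pow_one_of_pow_one {g : Perm α} (x : α) {m : ℕ} (hg : g ^ m = 1) :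
    (g.cycleOf x) ^ m = 1 := by
  ext y
  show ((g.cycleOf x) ^ m) y = y
  by_cases hy : g.SameCycle x y
  · obtain ⟨i, rfl⟩ := hy
    have h1 : (g ^ i) x = ((g.cycleOf x) ^ i) x := (cycleOf_zpow_apply_self g x i).symm
    have hc : Commute ((g.cycleOf x) ^ m) ((g.cycleOf x) ^ i) :=
      ((Commute.refl (g.cycleOf x)).pow_left m).zpow_right i
    calc ((g.cycleOf x) ^ m) ((g ^ i) x)
        = ((g.cycleOf x) ^ m * (g.cycleOf x) ^ i) x := by rw [h1]; rfl
      _ = ((g.cycleOf x) ^ i) (((g.cycleOf x) ^ m) x) := by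
          rw [hc.eq]; rfl
      _ = ((g.cycleOf x) ^ i) ((g ^ m) x) := by rw [cycleOf_pow_apply_self]
      _ = ((g.cycleOf x) ^ i) x := by rw [hg]; rfl
      _ = (g ^ i) x := cycleOf_zpow_apply_self g x i
  · have hfix : g.cycleOf x y = y := by
      rw [cycleOf_apply, if_neg hy]
    exact pow_apply_eq_self_of_apply_eq_self hfix m

lemma master_count {m n' : ℕ} (hm : 0 < m) (hcard : Fintype.card α = n') (x0 x1 x2 : α)
    (h01 : x0 ≠ x1) (h02 : x0 ≠ x2) (h12 : x1 ≠ x2) :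
    Nat.card {g : Perm α // g ^ m = 1 ∧ g.SameCycle x0 x1 ∧ g.SameCycle x0 x2}
      = ∑ d ∈ m.divisors.filter (fun d => 3 ≤ d ∧ d ≤ n'),
          (n' - 3).choose (d - 3) *
            ((d - 1).factorial *
              Nat.card {g : Perm (Fin (n' - d)) // g ^ m = 1}) := by
  classical
  subst hcard
  set n := Fintype.card α with hn
  set A : Finset α := {x0, x1, x2} with hA
  have hA3 : A.card = 3 := by
    rw [hA, card_insert_of_notMem (by simp [h01, h02]), card_insert_of_notMem (by simp [h12]),
      card_singleton]
  set D := m.divisors.filter (fun d => 3 ≤ d ∧ d ≤ n) with hD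
  set Q : Perm α → Prop := fun g => g ^ m = 1 ∧ g.SameCycle x0 x1 ∧ g.SameCycle x0 x2 with hQ
  set F : Finset (Perm α) := univ.filter Q with hF
  have hcard1 : Nat.card {g : Perm α // Q g} = F.card := by
    rw [Nat.card_eq_fintype_card, hF]
    exact Fintype.card_subtype _
  set T : Finset (Finset α) := univ.filter (fun S => x0 ∈ S ∧ x1 ∈ S ∧ x2 ∈ S ∧ S.card ∣ m)
    with hT
  have hTmem : ∀ S, S ∈ T ↔ x0 ∈ S ∧ x1 ∈ S ∧ x2 ∈ S ∧ S.card ∣ m := by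
    intro S
    rw [hT, mem_filter]
    simp
  have h3le : ∀ S ∈ T, 3 ≤ S.card := by
    intro S hS
    obtain ⟨hx0S, hx1S, hx2S, -⟩ := (hTmem S).mp hS
    have hsub : A ⊆ S := by
      rw [hA]
      intro y hy
      simp only [mem_insert, mem_singleton] at hy
      rcases hy with rfl | rfl | rfl <;> assumption
    calc 3 = A.card := hA3.symm
      _ ≤ S.card := card_le_card hsub
  have hmemF : ∀ g ∈ F, (g.cycleOf x0).support ∈ T := by
    intro g hg
    rw [hF, mem_filter] at hg
    obtain ⟨-, hgm, hsc1, hsc2⟩ := hg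
    have hx0g : x0 ∈ g.support := by
      rw [mem_support]
      intro hfix
      obtain ⟨i, hi⟩ := hsc1
      rw [zpow_apply_eq_self_of_apply_eq_self hfix i] at hi
      exact h01 hi
    have hcyc : (g.cycleOf x0).IsCycle := isCycle_cycleOf g (mem_support.mp hx0g)
    rw [hTmem]
    refine ⟨?_, ?_, ?_, ?_⟩
    · exact mem_support_cycleOf_iff.mpr ⟨Perm.SameCycle.refl g x0, hx0g⟩
    · exact mem_support_cycleOf_iff.mpr ⟨hsc1, hx0g⟩
    · exact mem_support_cycleOf_iff.mpr ⟨hsc2, hx0g⟩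
    · rw [← hcyc.orderOf]
      exact orderOf_dvd_iff_pow_eq_one.mpr (cycleOf_pow_one_of_pow_one x0 hgm)
  have hfib : F.card = ∑ S ∈ T, (F.filter (fun g => (g.cycleOf x0).support = S)).card :=
    card_eq_sum_card_fiberwise hmemF
  have hstep2 : ∀ S ∈ T, (F.filter (fun g => (g.cycleOf x0).support = S)).card
      = (S.card - 1).factorial * Nat.card {g : Perm (Fin (n - S.card)) // g ^ m = 1} := by
    intro S hS
    obtain ⟨hx0S, hx1S, hx2S, hdvd⟩ := (hTmem S).mp hS
    have h3 := h3le S hS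
    have heq : F.filter (fun g => (g.cycleOf x0).support = S)
        = univ.filter (fun g => g ^ m = 1 ∧ (g.cycleOf x0).support = S) := by
      rw [hF, filter_filter]
      apply filter_congr
      intro g _
      simp only [hQ, decide_eq_true_eq]
      constructor
      · rintro ⟨⟨h1, -, -⟩, h4⟩
        exact ⟨h1, h4⟩
      · rintro ⟨h1, h4⟩
        refine ⟨⟨h1, ?_, ?_⟩, h4⟩
        · exact ((mem_support_cycleOf_iff).mp (h4 ▸ hx1S)).1
        · exact ((mem_support_cycleOf_iff).mp (h4 ▸ hx2S)).1
    have hcards : (univ.filter (fun g : Perm α => g ^ m = 1 ∧ (g.cycleOf x0).support = S)).card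
        = Nat.card {g : Perm α // g ^ m = 1 ∧ (g.cycleOf x0).support = S} := by
      rw [Nat.card_eq_fintype_card]
      exact (Fintype.card_subtype _).symm
    have hecard : Fintype.card {x : α // x ∉ S} = n - S.card := by
      rw [Fintype.card_subtype_compl, Fintype.card_coe]
    rw [heq, hcards, card_fiber S x0 hx0S (by omega) hdvd, card_pow_subtype,
      card_pow_congr (Fintype.equivFinOfCardEq hecard) m]
  have hmapsTo : ∀ S ∈ T, S.card ∈ D := by
    intro S hS
    obtain ⟨-, -, -, hdvd⟩ := (hTmem S).mp hS
    rw [hD, mem_filter]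
    exact ⟨Nat.mem_divisors.mpr ⟨hdvd, hm.ne'⟩, h3le S hS,
      le_trans (card_le_card (subset_univ S)) (by rw [card_univ])⟩
  have hTd : ∀ d ∈ D, (T.filter (fun S => S.card = d)).card = (n - 3).choose (d - 3) := by
    intro d hd
    rw [hD, mem_filter, Nat.mem_divisors] at hd
    obtain ⟨⟨hdvd, -⟩, hd3, hdn⟩ := hd
    have hcardt : (Finset.powersetCard (d - 3) Aᶜ).card = (n - 3).choose (d - 3) := by
      rw [Finset.card_powersetCard, Finset.card_compl, hA3]
    rw [← hcardt]
    apply Finset.card_bij' (fun S _ => S \ A) (fun B _ => B ∪ A)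
    · intro S hS
      rw [mem_filter] at hS
      obtain ⟨hST, hSd⟩ := hS
      obtain ⟨hx0S, hx1S, hx2S, -⟩ := (hTmem S).mp hST
      have hsub : A ⊆ S := by
        rw [hA]
        intro y hy
        simp only [mem_insert, mem_singleton] at hy
        rcases hy with rfl | rfl | rfl <;> assumption
      rw [Finset.mem_powersetCard]
      constructor
      · intro y hy
        rw [Finset.mem_compl]
        exact (Finset.mem_sdiff.mp hy).2
      · rw [Finset.card_sdiff_of_subset hsub, hA3, hSd]
    · intro B hB
      rw [Finset.mem_powersetCard] at hB
      obtain ⟨hBsub, hBcard⟩ := hB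
      have hdisj : Disjoint B A := by
        rw [Finset.disjoint_left]
        intro y hyB hyA
        exact (Finset.mem_compl.mp (hBsub hyB)) hyA
      have hcardU : (B ∪ A).card = d := by
        rw [Finset.card_union_of_disjoint hdisj, hBcard, hA3]
        omega
      rw [mem_filter]
      refine ⟨(hTmem _).mpr ⟨?_, ?_, ?_, ?_⟩, hcardU⟩
      · exact Finset.mem_union_right _ (by rw [hA]; simp)
      · exact Finset.mem_union_right _ (by rw [hA]; simp)
      · exact Finset.mem_union_right _ (by rw [hA]; simp)
      · rw [hcardU]; exact hdvd
    · intro S hS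
      rw [mem_filter] at hS
      obtain ⟨hST, -⟩ := hS
      obtain ⟨hx0S, hx1S, hx2S, -⟩ := (hTmem S).mp hST
      have hsub : A ⊆ S := by
        rw [hA]
        intro y hy
        simp only [mem_insert, mem_singleton] at hy
        rcases hy with rfl | rfl | rfl <;> assumption
      exact Finset.sdiff_union_of_subset hsub
    · intro B hB
      rw [Finset.mem_powersetCard] at hB
      have hdisj : Disjoint B A := by
        rw [Finset.disjoint_left]
        intro y hyB hyA
        exact (Finset.mem_compl.mp (hB.1 hyB)) hyA
      rw [Finset.union_sdiff_right]
      exact Finset.sdiff_eq_self_of_disjoint hdisj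
  calc Nat.card {g : Perm α // Q g} = F.card := hcard1
    _ = ∑ S ∈ T, (F.filter (fun g => (g.cycleOf x0).support = S)).card := hfib
    _ = ∑ S ∈ T, (S.card - 1).factorial *
          Nat.card {g : Perm (Fin (n - S.card)) // g ^ m = 1} :=
        Finset.sum_congr rfl hstep2
    _ = ∑ d ∈ D, ∑ S ∈ T.filter (fun S => S.card = d), (S.card - 1).factorial *
          Nat.card {g : Perm (Fin (n - S.card)) // g ^ m = 1} :=
        (Finset.sum_fiberwise_of_maps_to hmapsTo _).symm
    _ = ∑ d ∈ D, (n - 3).choose (d - 3) *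
          ((d - 1).factorial * Nat.card {g : Perm (Fin (n - d)) // g ^ m = 1}) := by
        apply Finset.sum_congr rfl
        intro d hd
        have : ∀ S ∈ T.filter (fun S => S.card = d),
            (S.card - 1).factorial * Nat.card {g : Perm (Fin (n - S.card)) // g ^ m = 1}
              = (d - 1).factorial * Nat.card {g : Perm (Fin (n - d)) // g ^ m = 1} := by
          intro S hS
          rw [(mem_filter.mp hS).2]
        rw [Finset.sum_congr rfl this, Finset.sum_const, hTd d hd, smul_eq_mul]

lemma arith_nat (n d : ℕ) (h3 : 3 ≤ d) (hdn : d ≤ n) :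
    (n - 3).choose (d - 3) * (d - 1).factorial * (n - d).factorial
      = (n - 3).factorial * ((d - 1) * (d - 2)) := by
  obtain ⟨e, rfl⟩ : ∃ e, d = e + 3 := ⟨d - 3, by omega⟩
  have h1 := Nat.choose_mul_factorial_mul_factorial (show e ≤ n - 3 by omega)
  rw [show e + 3 - 1 = e + 2 by omega, show e + 3 - 2 = e + 1 by omega,
    show e + 3 - 3 = e by omega, show n - (e + 3) = n - 3 - e by omega,
    show e + 2 = (e + 1) + 1 from rfl, Nat.factorial_succ, Nat.factorial_succ, ← h1]
  ring


end Aux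

/-- For `n ≥ 3` and `m ≥ n - 1`, the proportion `P⁽¹⁾(n,m)` of `g ∈ S_n` of
order dividing `m` for which the points `1, 2, 3` (here the first three points
of `Fin n`) lie in the same `g`-cycle equals
`((n-3)!/n!) ∑_{d ∣ m, 3 ≤ d ≤ n} (d-1)(d-2) P(n-d, m)`. -/
theorem stmt15 (n m : ℕ) (hn : 3 ≤ n) (hm : 0 < m) (h : n - 1 ≤ m) :
    (Nat.card {g : Equiv.Perm (Fin n) // g ^ m = 1 ∧
        g.SameCycle ⟨0, by omega⟩ ⟨1, by omega⟩ ∧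
        g.SameCycle ⟨0, by omega⟩ ⟨2, by omega⟩} : ℝ) / (Nat.factorial n)
      = (Nat.factorial (n - 3) : ℝ) / (Nat.factorial n) *
        ∑ d ∈ m.divisors.filter (fun d => 3 ≤ d ∧ d ≤ n),
          ((d : ℝ) - 1) * ((d : ℝ) - 2) * P (n - d) m := by
  have h01 : (⟨0, by omega⟩ : Fin n) ≠ ⟨1, by omega⟩ := by
    intro hcon
    have := congrArg Fin.val hcon
    simp at this
  have h02 : (⟨0, by omega⟩ : Fin n) ≠ ⟨2, by omega⟩ := by
    intro hcon
    have := congrArg Fin.val hcon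
    simp at this
  have h12 : (⟨1, by omega⟩ : Fin n) ≠ ⟨2, by omega⟩ := by
    intro hcon
    have := congrArg Fin.val hcon
    simp at this
  have hmc := master_count (α := Fin n) hm (Fintype.card_fin n) _ _ _ h01 h02 h12
  rw [hmc]
  push_cast
  rw [Finset.mul_sum, Finset.sum_div]
  apply Finset.sum_congr rfl
  intro d hd
  rw [Finset.mem_filter, Nat.mem_divisors] at hd
  obtain ⟨⟨hdvd, -⟩, h3, hdn⟩ := hd
  have key : ((n - 3).choose (d - 3) * ((d - 1).factorial *
        Nat.card {g : Equiv.Perm (Fin (n - d)) // g ^ m = 1}) : ℕ)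
        * (n - d).factorial
      = (n - 3).factorial * ((d - 1) * (d - 2))
        * Nat.card {g : Equiv.Perm (Fin (n - d)) // g ^ m = 1} := by
    rw [← arith_nat n d h3 hdn]
    ring
  have keyR : (((n - 3).choose (d - 3) : ℝ) * (((d - 1).factorial : ℝ) *
        (Nat.card {g : Equiv.Perm (Fin (n - d)) // g ^ m = 1} : ℝ)))
        * ((n - d).factorial : ℝ)
      = ((n - 3).factorial : ℝ) * (((d - 1 : ℕ) : ℝ) * ((d - 2 : ℕ) : ℝ))
        * (Nat.card {g : Equiv.Perm (Fin (n - d)) // g ^ m = 1} : ℝ) := by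
    exact_mod_cast key
  have hd1 : ((d - 1 : ℕ) : ℝ) = (d : ℝ) - 1 := by
    rw [Nat.cast_sub (by omega)]
    simp
  have hd2 : ((d - 2 : ℕ) : ℝ) = (d : ℝ) - 2 := by
    rw [Nat.cast_sub (by omega)]
    simp
  rw [hd1, hd2] at keyR
  have hnd0 : ((n - d).factorial : ℝ) ≠ 0 := by
    exact_mod_cast (Nat.factorial_pos (n - d)).ne'
  have hn0 : ((n).factorial : ℝ) ≠ 0 := by
    exact_mod_cast (Nat.factorial_pos n).ne'
  rw [P]
  have hEdef : True := trivial
  calc _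
      = ((n - 3).choose (d - 3) : ℝ) * (((d - 1).factorial : ℝ) * (Nat.card {g : Equiv.Perm (Fin (n - d)) // g ^ m = 1} : ℝ)) * ((n - d).factorial : ℝ)
          / ((n.factorial : ℝ) * ((n - d).factorial : ℝ)) := by
        rw [mul_div_mul_right _ _ hnd0]
    _ = ((n - 3).factorial : ℝ) * (((d : ℝ) - 1) * ((d : ℝ) - 2)) * (Nat.card {g : Equiv.Perm (Fin (n - d)) // g ^ m = 1} : ℝ)
          / ((n.factorial : ℝ) * ((n - d).factorial : ℝ)) := by rw [keyR]
    _ = ((n - 3).factorial : ℝ) / (n.factorial : ℝ) *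
          (((d : ℝ) - 1) * ((d : ℝ) - 2) * ((Nat.card {g : Equiv.Perm (Fin (n - d)) // g ^ m = 1} : ℝ) / ((n - d).factorial : ℝ))) := by ring
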